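/- Let ⟨G,M,I⟩ be a formal context with G and M finite, and let (A,B) be a concept of ⟨G,M,I⟩. Define the family FS_{(A,B)} = { α({a}) ∩ B : a ∈ G \ A } of subsets of M. Then a concept (A',B') of ⟨G,M,I⟩ is an immediate successor of (A,B) in the concept lattice if and only if B' is an inclusion-maximal element of FS_{(A,B)}. Consequently, the map sending each immediate successor of (A,B) to its intent is a bijection between the set of immediate successors of (A,B) and the set of inclusion-maximal elements of FS_{(A,B)}. -/
import Mathlib


/-- The intent (derivation) of a set of objects: attributes shared by all of them. -/
def intentOf {G M : Type*} (I : G → M → Prop) (A : Set G) : Set M :=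
  {m | ∀ a ∈ A, I a m}

/-- The extent (derivation) of a set of attributes: objects possessing all of them. -/
def extentOf {G M : Type*} (I : G → M → Prop) (B : Set M) : Set G :=
  {g | ∀ b ∈ B, I g b}

/-- A formal concept of the context ⟨G,M,I⟩, given as a pair (extent, intent). -/
def IsConcept {G M : Type*} (I : G → M → Prop) (c : Set G × Set M) : Prop :=
  intentOf I c.1 = c.2 ∧ extentOf I c.2 = c.1

/-- The order on concepts: strict comparison by inclusion of extents. -/
def ConceptLT {G M : Type*} (c d : Set G × Set M) : Prop := c.1 ⊂ d.1

/-- `d` is an immediate successor of `c`: a concept strictly above `c`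
with no concept strictly in between. -/
def IsImmSucc {G M : Type*} (I : G → M → Prop) (d c : Set G × Set M) : Prop :=
  IsConcept I d ∧ ConceptLT c d ∧
    ∀ e, IsConcept I e → ConceptLT c e → ¬ ConceptLT e d

/-- The family FS_{(A,B)} = { α({a}) ∩ B : a ∈ G \ A }. -/
def FS {G M : Type*} (I : G → M → Prop) (A : Set G) (B : Set M) : Set (Set M) :=
  {Y | ∃ a, a ∉ A ∧ Y = intentOf I {a} ∩ B}

section Aux

variable {G M : Type*} (I : G → M → Prop)

lemma intent_anti {S T : Set G} (h : S ⊆ T) : intentOf I T ⊆ intentOf I S :=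
  fun m hm a ha => hm a (h ha)

lemma extent_anti {S T : Set M} (h : S ⊆ T) : extentOf I T ⊆ extentOf I S :=
  fun g hg b hb => hg b (h hb)

lemma subset_extent_intent (S : Set G) : S ⊆ extentOf I (intentOf I S) :=
  fun a ha m hm => hm a ha

lemma subset_intent_extent (B : Set M) : B ⊆ intentOf I (extentOf I B) :=
  fun m hm a ha => ha m hm

lemma intent_closed (S : Set G) :
    intentOf I (extentOf I (intentOf I S)) = intentOf I S :=
  subset_antisymm (intent_anti I (subset_extent_intent I S)) (subset_intent_extent I _)

lemma intent_union (S T : Set G) :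
    intentOf I (S ∪ T) = intentOf I S ∩ intentOf I T := by
  ext m
  simp only [intentOf, Set.mem_setOf_eq, Set.mem_inter_iff, Set.mem_union]
  constructor
  · exact fun h => ⟨fun a ha => h a (Or.inl ha), fun a ha => h a (Or.inr ha)⟩
  · rintro ⟨h1, h2⟩ a (ha | ha)
    exacts [h1 a ha, h2 a ha]

lemma concept_subset_iff {c d : Set G × Set M} (hc : IsConcept I c) (hd : IsConcept I d) :
    c.1 ⊆ d.1 ↔ d.2 ⊆ c.2 := by
  constructor
  · intro h; rw [← hc.1, ← hd.1]; exact intent_anti I h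
  · intro h; rw [← hc.2, ← hd.2]; exact extent_anti I h

lemma concept_eq_iff {c d : Set G × Set M} (hc : IsConcept I c) (hd : IsConcept I d) :
    c.1 = d.1 ↔ c.2 = d.2 := by
  constructor
  · intro h; rw [← hc.1, ← hd.1, h]
  · intro h; rw [← hc.2, ← hd.2, h]

end Aux

theorem bordat_immediate_successors
    {G M : Type*} [Finite G] [Finite M]
    (I : G → M → Prop) (A : Set G) (B : Set M)
    (hAB : IsConcept I (A, B)) :
    (∀ c : Set G × Set M, IsConcept I c →
      (IsImmSucc I c (A, B) ↔
        (c.2 ∈ FS I A B ∧ ∀ Y ∈ FS I A B, c.2 ⊆ Y → Y = c.2))) ∧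
    Set.BijOn Prod.snd
      {c : Set G × Set M | IsConcept I c ∧ IsImmSucc I c (A, B)}
      {Y ∈ FS I A B | ∀ Z ∈ FS I A B, Y ⊆ Z → Z = Y} := by
  have hBA : intentOf I A = B := hAB.1
  have hAeq : extentOf I B = A := hAB.2
  -- every FS element is a closed intent
  have hY_closed : ∀ a : G,
      intentOf I (extentOf I (intentOf I {a} ∩ B)) = intentOf I {a} ∩ B := by
    intro a
    have h : intentOf I {a} ∩ B = intentOf I ({a} ∪ A) := by
      rw [intent_union, hBA]
    rw [h, intent_closed]
  have hconceptY : ∀ a : G,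
      IsConcept I (extentOf I (intentOf I {a} ∩ B), intentOf I {a} ∩ B) :=
    fun a => ⟨hY_closed a, rfl⟩
  -- the concept generated by an FS element is strictly above (A, B)
  have hltY : ∀ a, a ∉ A → A ⊂ extentOf I (intentOf I {a} ∩ B) := by
    intro a ha
    have hsub : A ⊆ extentOf I (intentOf I {a} ∩ B) := by
      rw [← hAeq]; exact extent_anti I Set.inter_subset_right
    have hmem : a ∈ extentOf I (intentOf I {a} ∩ B) :=
      fun m hm => hm.1 a rfl
    exact (Set.ssubset_iff_of_subset hsub).mpr ⟨a, hmem, ha⟩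
  -- intents of concepts above (A,B) are below the corresponding FS elements
  have hsubY : ∀ (d : Set G × Set M), IsConcept I d → A ⊆ d.1 →
      ∀ a ∈ d.1, d.2 ⊆ intentOf I {a} ∩ B := by
    intro d hd hAd a had
    refine Set.subset_inter ?_ ((concept_subset_iff I hAB hd).mp hAd)
    rw [← hd.1]
    exact intent_anti I (Set.singleton_subset_iff.mpr had)
  -- the main characterization
  have main : ∀ c : Set G × Set M, IsConcept I c →
      (IsImmSucc I c (A, B) ↔
        (c.2 ∈ FS I A B ∧ ∀ Y ∈ FS I A B, c.2 ⊆ Y → Y = c.2)) := by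
    intro c hc
    constructor
    · rintro ⟨hcC, hlt, hmax⟩
      have hAc : A ⊂ c.1 := hlt
      obtain ⟨a, haC, haA⟩ := Set.exists_of_ssubset hAc
      have key : ∀ a', a' ∉ A → a' ∈ c.1 → intentOf I {a'} ∩ B = c.2 := by
        intro a' ha'A ha'C
        have hYc : c.2 ⊆ intentOf I {a'} ∩ B := hsubY c hc hAc.subset a' ha'C
        have hsub : extentOf I (intentOf I {a'} ∩ B) ⊆ c.1 := by
          rw [← hc.2]; exact extent_anti I hYc
        have hnlt := hmax _ (hconceptY a') (hltY a' ha'A)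
        have heq : extentOf I (intentOf I {a'} ∩ B) = c.1 := by
          by_contra hne
          exact hnlt (HasSubset.Subset.ssubset_of_ne hsub hne)
        calc intentOf I {a'} ∩ B
            = intentOf I (extentOf I (intentOf I {a'} ∩ B)) := (hY_closed a').symm
          _ = intentOf I c.1 := by rw [heq]
          _ = c.2 := hc.1
      refine ⟨⟨a, haA, (key a haA haC).symm⟩, ?_⟩
      rintro Z ⟨a', ha'A, rfl⟩ hsub
      have ha'c : a' ∈ c.1 := by
        rw [← hc.2]
        intro m hm
        exact (hsub hm).1 a' rfl
      exact key a' ha'A ha'c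
    · rintro ⟨⟨a, haA, hYeq⟩, hmaxFS⟩
      have h1 : c.1 = extentOf I (intentOf I {a} ∩ B) := by rw [← hc.2, hYeq]
      refine ⟨hc, ?_, ?_⟩
      · show A ⊂ c.1
        rw [h1]; exact hltY a haA
      · intro e he hlte hcontra
        have hlte' : A ⊂ e.1 := hlte
        have hcontra' : e.1 ⊂ c.1 := hcontra
        obtain ⟨a', ha'e, ha'A⟩ := Set.exists_of_ssubset hlte'
        have h2 : c.2 ⊆ e.2 := (concept_subset_iff I he hc).mp hcontra'.subset
        have h3 : e.2 ⊆ intentOf I {a'} ∩ B := hsubY e he hlte'.subset a' ha'e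
        have h4 : intentOf I {a'} ∩ B = c.2 :=
          hmaxFS _ ⟨a', ha'A, rfl⟩ (h2.trans h3)
        have h5 : e.2 = c.2 := subset_antisymm (h4 ▸ h3) h2
        exact hcontra'.ne ((concept_eq_iff I he hc).mpr h5)
  refine ⟨main, ?_, ?_, ?_⟩
  · rintro c ⟨hc, hsucc⟩
    exact ((main c hc).mp hsucc : _)
  · rintro c ⟨hc, _⟩ d ⟨hd, _⟩ h
    have h1 : c.1 = d.1 := (concept_eq_iff I hc hd).mpr h
    exact Prod.ext h1 h
  · rintro Y ⟨hYFS, hYmax⟩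
    obtain ⟨a, haA, rfl⟩ := hYFS
    refine ⟨(extentOf I (intentOf I {a} ∩ B), intentOf I {a} ∩ B), ⟨hconceptY a, ?_⟩, rfl⟩
    exact (main _ (hconceptY a)).mpr ⟨⟨a, haA, rfl⟩, hYmax⟩
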